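/- Let T̂_U and T̂_V be trees of finite binary strings with [T̂_U] nonempty, let (T_{U,s}) and (T_{V,s}) be their canonical approximations, let Ψ be a stagewise functional, and let ℓ be the associated length-of-agreement function. Then for every fixed n ∈ ℕ there is a stage r such that either ℓ(r') ≥ n for all r' ≥ r, or ℓ(r') < n for all r' ≥ r. -/

import Mathlib

/-- A tree: a set of finite binary strings closed under initial segments. -/
def IsTree (T : Set (List Bool)) : Prop :=
  ∀ σ ∈ T, ∀ τ : List Bool, τ <+: σ → τ ∈ T

/-- Canonical approximation at stage `s` of a tree `T`. -/
def canonApprox (T : Set (List Bool)) (s : ℕ) : Set (List Bool) :=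
  {σ ∈ T | ∃ τ ∈ T, τ.length = s ∧ (τ <+: σ ∨ σ <+: τ)}

/-- The string of the first `n` values of `X`. -/
def restrict (X : ℕ → Bool) (n : ℕ) : List Bool :=
  (List.range n).map X

/-- The set of infinite paths through a set of strings. -/
def paths (T : Set (List Bool)) : Set (ℕ → Bool) :=
  {X | ∀ n, restrict X n ∈ T}

/-- A stagewise functional: monotone in both the stage and the input string. -/
def Stagewise (Ψ : ℕ → List Bool → List Bool) : Prop :=
  ∀ s s', s ≤ s' → ∀ σ σ' : List Bool, σ <+: σ' → Ψ s σ <+: Ψ s' σ'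

/-- The set of which the length of agreement at stage `s` is the least element. -/
def disagreeSet (TU TV : Set (List Bool)) (Ψ : ℕ → List Bool → List Bool) (s : ℕ) :
    Set ℕ :=
  {y | ∃ σ ∈ canonApprox TU s, σ.length = s ∧
      ((Ψ s σ).length < y + 1 ∨ (Ψ s σ).take (y + 1) ∉ canonApprox TV s)}
section Aux

variable {T : Set (List Bool)} {s s' : ℕ}

lemma mem_canonApprox_of_length (σ : List Bool) (hσ : σ ∈ T) (hlen : σ.length = s) :
    σ ∈ canonApprox T s :=
  ⟨hσ, σ, hσ, hlen, Or.inl List.prefix_rfl⟩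

/-- The canonical approximation is closed under prefixes. -/
lemma canonApprox_prefix_closed (hT : IsTree T) {ρ ρ' : List Bool} (hpre : ρ' <+: ρ)
    (h : ρ ∈ canonApprox T s) : ρ' ∈ canonApprox T s := by
  obtain ⟨hρ, τ, hτ, hτlen, hcomp⟩ := h
  refine ⟨hT ρ hρ ρ' hpre, τ, hτ, hτlen, ?_⟩
  rcases hcomp with h1 | h1
  · exact List.prefix_or_prefix_of_prefix h1 hpre
  · exact Or.inr (hpre.trans h1)

/-- For strings of length at most `s`, membership in the canonical approximation is
antitone in the stage (from stage `s` on). -/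
lemma canonApprox_antitone (hT : IsTree T) {ρ : List Bool}
    (hρ : ρ.length ≤ s) (hss : s ≤ s') (h : ρ ∈ canonApprox T s') : ρ ∈ canonApprox T s := by
  obtain ⟨hmem, τ, hτ, hτlen, hcomp⟩ := h
  rcases hcomp with h1 | h1
  · -- τ <+: ρ with |τ| = s' ≥ s ≥ |ρ|, so τ = ρ
    have hle : τ.length ≤ ρ.length := h1.length_le
    have heq : τ = ρ := h1.eq_of_length (le_antisymm hle (by omega))
    have hl : ρ.length = s := by have := congrArg List.length heq; omega
    exact ⟨hmem, ρ, hmem, hl, Or.inl List.prefix_rfl⟩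
  · -- ρ <+: τ, use τ.take s
    refine ⟨hmem, τ.take s, hT τ hτ _ (List.take_prefix _ _), by simp [hτlen]; omega, ?_⟩
    exact Or.inr (List.prefix_take_iff.2 ⟨h1, hρ⟩)

end Aux

/-- Prefixes of a common list agree on `take`. -/
lemma take_eq_of_prefix {l₁ l₂ : List Bool} (h : l₁ <+: l₂) {n : ℕ} (hn : n ≤ l₁.length) :
    l₂.take n = l₁.take n := by
  obtain ⟨t, rfl⟩ := h
  rw [List.take_append, Nat.sub_eq_zero_of_le hn]
  simp

theorem lengthOfAgreement_eventually_ge_or_lt (TU TV : Set (List Bool))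
    (hTU : IsTree TU) (hTV : IsTree TV) (hne : (paths TU).Nonempty)
    (Ψ : ℕ → List Bool → List Bool) (hΨ : Stagewise Ψ)
    (ℓ : ℕ → ℕ) (hℓ : ∀ s, IsLeast (disagreeSet TU TV Ψ s) (ℓ s)) :
    ∀ n, ∃ r, (∀ r', r ≤ r' → n ≤ ℓ r') ∨ (∀ r', r ≤ r' → ℓ r' < n) := by
  intro n
  rcases Nat.eq_zero_or_pos n with rfl | hn
  · exact ⟨0, Or.inl fun r' _ => Nat.zero_le _⟩
  classical
  -- `Bad σ s` : σ witnesses disagreement below n at stage s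
  set Bad : List Bool → ℕ → Prop := fun σ s =>
    σ ∈ TU ∧ σ.length = s ∧
      ((Ψ s σ).length < n ∨ (Ψ s σ).take n ∉ canonApprox TV s) with hBad
  -- ℓ s < n ↔ ∃ bad σ at stage s
  have key : ∀ s, ℓ s < n ↔ ∃ σ, Bad σ s := by
    intro s
    constructor
    · intro hlt
      obtain ⟨σ, hσ, hσlen, hdis⟩ := (hℓ s).1
      refine ⟨σ, hσ.1, hσlen, ?_⟩
      rcases hdis with h1 | h1
      · exact Or.inl (by omega)
      · by_cases h2 : (Ψ s σ).length < n
        · exact Or.inl h2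
        · refine Or.inr fun hmem => h1 ?_
          exact canonApprox_prefix_closed hTV
            (List.take_prefix_take_left (by omega)) hmem
    · rintro ⟨σ, hσ, hσlen, hd⟩
      have hmem : n - 1 ∈ disagreeSet TU TV Ψ s := by
        refine ⟨σ, mem_canonApprox_of_length σ hσ hσlen, hσlen, ?_⟩
        have hnn : n - 1 + 1 = n := by omega
        rw [hnn]
        exact hd
      have := (hℓ s).2 hmem
      omega
  -- stabilization stage for each string of length n
  have hex : ∀ ρ : List Bool, ∃ m, ρ.length = n → ∀ s s', m ≤ s → s ≤ s' →
      ρ ∈ canonApprox TV s → ρ ∈ canonApprox TV s' := by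
    intro ρ
    by_cases h : ∃ s, n ≤ s ∧ ρ ∉ canonApprox TV s
    · obtain ⟨m, hm, hnot⟩ := h
      exact ⟨m, fun hρlen s s' hms hss hmem =>
        absurd (canonApprox_antitone hTV (by omega) hms hmem) hnot⟩
    · push_neg at h
      exact ⟨n, fun hρlen s s' hms hss _ => h s' (by omega)⟩
  choose g hg using hex
  -- uniform stabilization bound
  have hfin : {ρ : List Bool | ρ.length = n}.Finite := List.finite_length_eq Bool n
  obtain ⟨C, hC⟩ := (hfin.image g).bddAbove
  set s₀ := max n C with hs₀
  have hgC : ∀ ρ : List Bool, ρ.length = n → g ρ ≤ s₀ := by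
    intro ρ hρ
    have : g ρ ∈ g '' {ρ : List Bool | ρ.length = n} := ⟨ρ, hρ, rfl⟩
    exact le_trans (hC this) (le_max_right _ _)
  by_cases hgood : ∃ s, s₀ ≤ s ∧ ¬ ∃ σ, Bad σ s
  · -- good at some s ≥ s₀ : good forever after
    obtain ⟨s, hs, hgs⟩ := hgood
    refine ⟨s, Or.inl fun r' hr' => ?_⟩
    by_contra hcon
    push_neg at hcon
    obtain ⟨σ', hσ'U, hσ'len, hd⟩ := (key r').1 hcon
    -- the length-s prefix of σ' was good at stage s
    set σ := σ'.take s with hσdef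
    have hpre : σ <+: σ' := List.take_prefix _ _
    have hσU : σ ∈ TU := hTU σ' hσ'U σ hpre
    have hσlen : σ.length = s := by simp [hσdef, hσ'len]; omega
    have hσgood : ¬ Bad σ s := fun hb => hgs ⟨σ, hb⟩
    simp only [hBad] at hσgood
    push_neg at hσgood
    obtain ⟨h1, h2⟩ := hσgood hσU hσlen
    -- transfer goodness to stage r'
    have hΨpre : Ψ s σ <+: Ψ r' σ' := hΨ s r' hr' σ σ' hpre
    have hΨlen : n ≤ (Ψ r' σ').length := le_trans h1 hΨpre.length_le
    have htake : (Ψ r' σ').take n = (Ψ s σ).take n := take_eq_of_prefix hΨpre h1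
    have hρlen : ((Ψ s σ).take n).length = n := by simp; omega
    have hmem : (Ψ s σ).take n ∈ canonApprox TV r' :=
      hg _ hρlen s r' (le_trans (hgC _ hρlen) hs) hr' h2
    rcases hd with h3 | h3
    · omega
    · rw [htake] at h3; exact h3 hmem
  · push_neg at hgood
    refine ⟨s₀, Or.inr fun r' hr' => (key r').2 ?_⟩
    exact hgood r' hr'
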